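/- Let c ∈ ℕ with c > 0, n ∈ ℕ, y ∈ [0,1]^n, and q ∈ ℕ^n with q_i ≤ c for all i. Then min{c, ∑_{i=1}^n y_i q_i} ≥ c − c·∏_{i=1}^n (1 − y_i q_i / c). -/

import Mathlib

lemma weier {α : Type*} (s : Finset α) (x : α → ℝ) (h0 : ∀ i, 0 ≤ x i)
    (h1 : ∀ i, x i ≤ 1) : 1 - ∑ i ∈ s, x i ≤ ∏ i ∈ s, (1 - x i) := by
  classical
  induction s using Finset.induction_on with
  | empty => simp
  | @insert a s hi ih =>
    rw [Finset.sum_insert hi, Finset.prod_insert hi]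
    have hp : 0 ≤ ∏ i ∈ s, (1 - x i) :=
      Finset.prod_nonneg fun i _ => by linarith [h1 i]
    nlinarith [h0 a, h1 a, Finset.sum_nonneg fun i (_ : i ∈ s) => h0 i]

/-- Lemma 5: for `c > 0`, `y i ∈ [0,1]`, `q i ≤ c`,
`min c (∑ y i q i) ≥ c − c ∏ (1 − y i q i / c)`. -/
theorem stmt_1 (c : ℕ) (hc : 0 < c) (n : ℕ) (y : Fin n → ℝ) (q : Fin n → ℕ)
    (hy : ∀ i, y i ∈ Set.Icc (0 : ℝ) 1) (hq : ∀ i, q i ≤ c) :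
    min (c : ℝ) (∑ i, y i * (q i : ℝ)) ≥
      (c : ℝ) - (c : ℝ) * ∏ i, (1 - y i * (q i : ℝ) / (c : ℝ)) := by
  have hcR : (0 : ℝ) < c := by exact_mod_cast hc
  set x : Fin n → ℝ := fun i => y i * (q i : ℝ) / c with hx
  have h0 : ∀ i, 0 ≤ x i := fun i =>
    div_nonneg (mul_nonneg (hy i).1 (Nat.cast_nonneg _)) hcR.le
  have h1 : ∀ i, x i ≤ 1 := by
    intro i
    rw [div_le_one hcR]
    calc y i * (q i : ℝ) ≤ 1 * (q i : ℝ) :=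
          mul_le_mul_of_nonneg_right (hy i).2 (Nat.cast_nonneg _)
      _ ≤ c := by simpa using (Nat.cast_le (α := ℝ)).2 (hq i)
  have hw := weier Finset.univ x h0 h1
  have hp : 0 ≤ ∏ i, (1 - x i) := Finset.prod_nonneg fun i _ => by linarith [h1 i]
  have hsum : ∑ i, y i * (q i : ℝ) = c * ∑ i, x i := by
    rw [Finset.mul_sum]; congr 1; ext i; rw [hx]; field_simp
  rw [ge_iff_le, le_min_iff]
  constructor
  · nlinarith
  · rw [hsum]; nlinarith
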